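/- Let α and β be real numbers with β irrational. Suppose there exists m ∈ ℕ such that for every natural number n ≥ m there exist ε ∈ {1, −1} and an integer k with n·α = ε·(n·β) + k. Then there exist ε ∈ {1, −1} and an integer k with α = ε·β + k. -/

import Mathlib

/-- If `n·α = ±(n·β) + k_n` (with `k_n ∈ ℤ`) for all sufficiently large `n`, and
`β` is irrational, then `α = ±β + k` for some integer `k`. -/
theorem stmt_9 (α β : ℝ) (hβ : Irrational β)
    (hev : ∃ m : ℕ, ∀ n : ℕ, m ≤ n →
      ∃ ε : ℝ, (ε = 1 ∨ ε = -1) ∧ ∃ k : ℤ, (n : ℝ) * α = ε * ((n : ℝ) * β) + (k : ℝ)) :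
    ∃ ε : ℝ, (ε = 1 ∨ ε = -1) ∧ ∃ k : ℤ, α = ε * β + (k : ℝ) := by
  obtain ⟨m, h⟩ := hev
  obtain ⟨ε1, hε1, k1, e1⟩ := h m le_rfl
  obtain ⟨ε2, hε2, k2, e2⟩ := h (m + 1) (by omega)
  obtain ⟨ε3, hε3, k3, e3⟩ := h (m + 2) (by omega)
  push_cast at e1 e2 e3
  have hm4 : ((4 * (m + 1) : ℤ) : ℝ) ≠ 0 := by push_cast; positivity
  have hirr : Irrational (((4 * (m + 1) : ℤ) : ℝ) * β) :=
    hβ.intCast_mul (by positivity)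
  rcases hε1 with rfl | rfl <;> rcases hε2 with rfl | rfl <;> rcases hε3 with rfl | rfl
  · exact ⟨1, Or.inl rfl, k2 - k1, by push_cast; nlinarith⟩
  · exact ⟨1, Or.inl rfl, k2 - k1, by push_cast; nlinarith⟩
  · exfalso
    exact hirr.ne_int (2 * k2 - k1 - k3) (by push_cast; nlinarith)
  · exact ⟨-1, Or.inr rfl, k3 - k2, by push_cast; nlinarith⟩
  · exact ⟨1, Or.inl rfl, k3 - k2, by push_cast; nlinarith⟩
  · exfalso
    exact hirr.ne_int (k1 + k3 - 2 * k2) (by push_cast; nlinarith)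
  · exact ⟨-1, Or.inr rfl, k2 - k1, by push_cast; nlinarith⟩
  · exact ⟨-1, Or.inr rfl, k2 - k1, by push_cast; nlinarith⟩
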